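/- Let ν be a probability measure on S and ε > 0. Suppose: (a) V^{FE} is bounded measurable, satisfies the ALP (Bellman) constraints, and ∫_S |V* − V^{FE}| dν ≤ 2ε/(1−γ); (b) W is bounded measurable, satisfies the ALP constraints, and sup_{s∈S} |V^{FE}(s) − W(s)| ≤ 2ε/(1−γ); and (c) V' is bounded measurable, satisfies the ALP constraints, and ∫_S V' dν ≥ ∫_S W dν. Then ∫_S |V* − V'| dν ≤ 4ε/(1−γ). -/

import Mathlib

open MeasureTheory ProbabilityTheory

lemma alp_le_vstar
    {S A : Type*} [MeasurableSpace S] [MeasurableSpace A] [Nonempty S]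
    (Act : S → Set A) (hAct : ∀ s, (Act s).Nonempty)
    (c : S × A → ℝ)
    (γ : ℝ) (hγ0 : 0 ≤ γ) (hγ1 : γ < 1)
    (P : Kernel (S × A) S) [IsMarkovKernel P]
    (Vstar : S → ℝ) (hVstar_meas : Measurable Vstar)
    (hVstar_bdd : ∃ M, ∀ s, |Vstar s| ≤ M)
    (hBellman : ∀ s : S,
      Vstar s = ⨅ a : Act s, (c (s, (a : A)) + γ * ∫ s', Vstar s' ∂(P (s, (a : A)))))
    (V : S → ℝ) (hV_meas : Measurable V) (hV_bdd : ∃ M, ∀ s, |V s| ≤ M)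
    (hV_ALP : ∀ s : S, ∀ a ∈ Act s, V s - γ * ∫ s', V s' ∂(P (s, a)) ≤ c (s, a)) :
    ∀ s, V s ≤ Vstar s := by
  obtain ⟨M1, hM1⟩ := hVstar_bdd
  obtain ⟨M2, hM2⟩ := hV_bdd
  set D := ⨆ s, (V s - Vstar s) with hD
  have hbdd : BddAbove (Set.range fun s => V s - Vstar s) := by
    refine ⟨M2 + M1, ?_⟩
    rintro x ⟨s, rfl⟩
    have h1 := abs_le.1 (hM1 s)
    have h2 := abs_le.1 (hM2 s)
    simp only
    linarith [h1.1, h2.2]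
  have hle : ∀ s, V s - Vstar s ≤ D := fun s => le_ciSup hbdd s
  have key : ∀ s, V s - Vstar s ≤ γ * D := by
    intro s
    have hne : Nonempty (Act s) := (hAct s).to_subtype
    have h1 : V s - γ * D ≤ ⨅ a : Act s,
        (c (s, (a : A)) + γ * ∫ s', Vstar s' ∂(P (s, (a : A)))) := by
      apply le_ciInf
      intro a
      have hiV : Integrable V (P (s, (a : A))) :=
        (integrable_const M2).mono' hV_meas.aestronglyMeasurable
          (Filter.Eventually.of_forall fun x => by simpa using hM2 x)
      have hiVs : Integrable Vstar (P (s, (a : A))) :=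
        (integrable_const M1).mono' hVstar_meas.aestronglyMeasurable
          (Filter.Eventually.of_forall fun x => by simpa using hM1 x)
      have hInt : ∫ s', V s' ∂(P (s, (a : A))) ≤
          (∫ s', Vstar s' ∂(P (s, (a : A)))) + D := by
        have h : ∫ s', V s' ∂(P (s, (a : A))) ≤
            ∫ s', (Vstar s' + D) ∂(P (s, (a : A))) :=
          integral_mono hiV ((hiVs.add (integrable_const D) : Integrable (fun s' => Vstar s' + D) _))
            (fun s' => by have := hle s'; linarith)
        rwa [integral_add hiVs (integrable_const D), integral_const, probReal_univ,
          one_smul] at h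
      have halp := hV_ALP s a a.2
      nlinarith [mul_le_mul_of_nonneg_left hInt hγ0]
    rw [← hBellman s] at h1
    linarith
  have hDγ : D ≤ γ * D := ciSup_le key
  have hD0 : D ≤ 0 := by nlinarith
  intro s
  linarith [hle s]

theorem stmt_17
    {S A : Type*} [MeasurableSpace S] [MeasurableSpace A]
    (Act : S → Set A) (hAct : ∀ s, (Act s).Nonempty)
    (c : S × A → ℝ) (hc_meas : Measurable c) (hc_bdd : ∃ M, ∀ p, |c p| ≤ M)
    (γ : ℝ) (hγ0 : 0 ≤ γ) (hγ1 : γ < 1)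
    (P : Kernel (S × A) S) [IsMarkovKernel P]
    (Vstar : S → ℝ) (hVstar_meas : Measurable Vstar)
    (hVstar_bdd : ∃ M, ∀ s, |Vstar s| ≤ M)
    (hBellman : ∀ s : S,
      Vstar s = ⨅ a : Act s, (c (s, (a : A)) + γ * ∫ s', Vstar s' ∂(P (s, (a : A)))))
    (ν : Measure S) [IsProbabilityMeasure ν]
    (ε : ℝ) (hε : 0 < ε)
    (VFE : S → ℝ) (hVFE_meas : Measurable VFE) (hVFE_bdd : ∃ M, ∀ s, |VFE s| ≤ M)
    (hVFE_ALP : ∀ s : S, ∀ a ∈ Act s, VFE s - γ * ∫ s', VFE s' ∂(P (s, a)) ≤ c (s, a))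
    (hVFE_close : ∫ s, |Vstar s - VFE s| ∂ν ≤ 2 * ε / (1 - γ))
    (W : S → ℝ) (hW_meas : Measurable W) (hW_bdd : ∃ M, ∀ s, |W s| ≤ M)
    (hW_ALP : ∀ s : S, ∀ a ∈ Act s, W s - γ * ∫ s', W s' ∂(P (s, a)) ≤ c (s, a))
    (hW_close : ∀ s : S, |VFE s - W s| ≤ 2 * ε / (1 - γ))
    (V' : S → ℝ) (hV'_meas : Measurable V') (hV'_bdd : ∃ M, ∀ s, |V' s| ≤ M)
    (hV'_ALP : ∀ s : S, ∀ a ∈ Act s, V' s - γ * ∫ s', V' s' ∂(P (s, a)) ≤ c (s, a))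
    (hV'_opt : ∫ s, W s ∂ν ≤ ∫ s, V' s ∂ν) :
    ∫ s, |Vstar s - V' s| ∂ν ≤ 4 * ε / (1 - γ) := by
  have hγ : (0:ℝ) < 1 - γ := by linarith
  rcases isEmpty_or_nonempty S with hS | hS
  · exfalso
    have := measure_univ (μ := ν)
    simp [Set.univ_eq_empty_iff.2 hS] at this
  have hV'le : ∀ s, V' s ≤ Vstar s :=
    alp_le_vstar Act hAct c γ hγ0 hγ1 P Vstar hVstar_meas hVstar_bdd hBellman
      V' hV'_meas hV'_bdd hV'_ALP
  have hWle : ∀ s, W s ≤ Vstar s :=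
    alp_le_vstar Act hAct c γ hγ0 hγ1 P Vstar hVstar_meas hVstar_bdd hBellman
      W hW_meas hW_bdd hW_ALP
  obtain ⟨M0, hM0⟩ := hVstar_bdd
  obtain ⟨M1, hM1⟩ := hV'_bdd
  obtain ⟨M2, hM2⟩ := hW_bdd
  obtain ⟨M3, hM3⟩ := hVFE_bdd
  have iVs : Integrable Vstar ν :=
    (integrable_const M0).mono' hVstar_meas.aestronglyMeasurable
      (Filter.Eventually.of_forall fun x => by simpa using hM0 x)
  have iV' : Integrable V' ν :=
    (integrable_const M1).mono' hV'_meas.aestronglyMeasurable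
      (Filter.Eventually.of_forall fun x => by simpa using hM1 x)
  have iW : Integrable W ν :=
    (integrable_const M2).mono' hW_meas.aestronglyMeasurable
      (Filter.Eventually.of_forall fun x => by simpa using hM2 x)
  have iVFE : Integrable VFE ν :=
    (integrable_const M3).mono' hVFE_meas.aestronglyMeasurable
      (Filter.Eventually.of_forall fun x => by simpa using hM3 x)
  have habs : ∀ s, |Vstar s - V' s| = Vstar s - V' s :=
    fun s => abs_of_nonneg (by linarith [hV'le s])
  have h1 : ∫ s, |Vstar s - V' s| ∂ν = ∫ s, Vstar s ∂ν - ∫ s, V' s ∂ν := by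
    rw [integral_congr_ae (Filter.Eventually.of_forall habs), integral_sub iVs iV']
  have h2 : ∫ s, Vstar s ∂ν - ∫ s, V' s ∂ν ≤ ∫ s, Vstar s ∂ν - ∫ s, W s ∂ν := by
    linarith
  have h3 : ∫ s, Vstar s ∂ν - ∫ s, W s ∂ν = ∫ s, (Vstar s - W s) ∂ν :=
    (integral_sub iVs iW).symm
  have h4 : ∫ s, (Vstar s - W s) ∂ν ≤
      ∫ s, (|Vstar s - VFE s| + 2 * ε / (1 - γ)) ∂ν := by
    refine integral_mono (iVs.sub iW)
      (((iVs.sub iVFE).abs).add (integrable_const _)) (fun s => ?_)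
    have h5 := hW_close s
    have h6 := abs_sub_abs_le_abs_sub (Vstar s - W s) (VFE s - W s)
    have h7 : |Vstar s - W s| ≤ |Vstar s - VFE s| + |VFE s - W s| := by
      calc |Vstar s - W s| = |(Vstar s - VFE s) + (VFE s - W s)| := by ring_nf
        _ ≤ |Vstar s - VFE s| + |VFE s - W s| := abs_add_le _ _
    have := le_abs_self (Vstar s - W s)
    linarith
  have h8 : ∫ s, (|Vstar s - VFE s| + 2 * ε / (1 - γ)) ∂ν
      = (∫ s, |Vstar s - VFE s| ∂ν) + 2 * ε / (1 - γ) := by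
    have hIa : Integrable (fun s => |Vstar s - VFE s|) ν := (iVs.sub iVFE).abs
    rw [integral_add hIa (integrable_const _), integral_const,
      probReal_univ, one_smul]
  have hfin : 2 * ε / (1 - γ) + 2 * ε / (1 - γ) = 4 * ε / (1 - γ) := by
    field_simp; ring
  linarith
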